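/- For every 0 ≤ i ≤ s one has the equality of ideals of ℤ[G]: Fitt_i(M_s(ν_1,…,ν_s,τ_1,…,τ_s)) = Σ_{j=0}^{s−i} Σ_a ν_{a_1}⋯ν_{a_j} · Fitt_i(N_{s−j}(τ_{a_{j+1}},…,τ_{a_s})), where for each j the inner sum runs over all subsets a = {a_1 < ⋯ < a_j} of {1,…,s} of cardinality j, and a_{j+1} < ⋯ < a_s are the elements of the complement of a. -/

import Mathlib

open MonoidAlgebra Finset

/-- The sum `ν_H = Σ_{σ ∈ H} σ` of the elements of a subgroup `H` in the group algebra. -/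
noncomputable def nuElt (R : Type) [CommRing R] {G : Type} [CommGroup G] [Fintype G]
    (H : Subgroup G) : MonoidAlgebra R G :=
  letI := Classical.decPred (· ∈ H)
  ∑ σ ∈ Finset.univ.filter (· ∈ H), MonoidAlgebra.of R G σ

/-- `Fitt_i(A)`: the ideal generated by the `(n-i) × (n-i)` minors of a matrix `A`
with `n` columns (so `Fitt_i(A) = (1)` for `i ≥ n`, and `(0)` if `A` has fewer than
`n - i` rows). -/
noncomputable def fittMat {R : Type} [CommRing R] {m n : Type} [Fintype m] [Fintype n]
    (A : Matrix m n R) (i : ℕ) : Ideal R :=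
  Ideal.span {x : R |
    ∃ (r : Fin (Fintype.card n - i) → m) (c : Fin (Fintype.card n - i) → n),
      x = (A.submatrix r c).det}

/-- The index type for the rows of `N_s`: pairs `l < l'`. -/
abbrev rowPairs (s : ℕ) := {p : Fin s × Fin s // p.1 < p.2}

/-- The matrix `N_s(t_1, …, t_s)`: row `(l, l')` has `-t_{l'}` in column `l`,
`t_l` in column `l'`, and `0` elsewhere. -/
noncomputable def Nmat {R : Type} [CommRing R] {s : ℕ} (t : Fin s → R) :
    Matrix (rowPairs s) (Fin s) R :=
  fun p l => if l = p.val.1 then -t p.val.2 else if l = p.val.2 then t p.val.1 else 0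

/-- The matrix `M_s(ν_1, …, ν_s, τ_1, …, τ_s)`: `N_s(τ_1, …, τ_s)` with `s` extra rows
appended, the `l`-th of which has `ν_l` in column `l` and `0` elsewhere. -/
noncomputable def Mmat {R : Type} [CommRing R] {s : ℕ} (ν t : Fin s → R) :
    Matrix (Fin s ⊕ rowPairs s) (Fin s) R :=
  Sum.elim (fun l l' => if l' = l then ν l else 0) (Nmat t)

/-- `I = I_1 × ⋯ × I_s` where `I_l` is the (possibly trivial) cyclic subgroup generated
by `σ l`: every element of `I` is, in a unique way, the product of elements of the
subgroups `⟨σ l⟩`. -/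
def IsDecomp {G : Type} [CommGroup G] (I : Subgroup G) {s : ℕ} (σ : Fin s → G) : Prop :=
  (∀ l, σ l ∈ I) ∧
    ∀ g ∈ I, ∃! x : ∀ l, Subgroup.zpowers (σ l), (∏ l, ((x l : G))) = g

/-- The ideal `Z_i` generated by the products `ν_{l_1} ⋯ ν_{l_{s-i}}` over all
`(s-i)`-element subsets `{l_1 < ⋯ < l_{s-i}}` of `{1, …, s}`. -/
noncomputable def Zideal {G : Type} [CommGroup G] [Fintype G] {s : ℕ} (σ : Fin s → G)
    (i : ℕ) : Ideal (MonoidAlgebra ℤ G) :=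
  Ideal.span {x | ∃ T : Finset (Fin s), T.card = s - i ∧
    x = ∏ l ∈ T, nuElt ℤ (Subgroup.zpowers (σ l))}

/-- The augmentation-type kernel ideal `𝓘_H = ker(ℤ[G] → ℤ[G/H])`. -/
noncomputable def kerIdeal {G : Type} [CommGroup G] [Fintype G] (H : Subgroup G) :
    Ideal (MonoidAlgebra ℤ G) :=
  RingHom.ker (MonoidAlgebra.mapDomainRingHom ℤ (QuotientGroup.mk' H))

namespace Aux

open Matrix

variable {R : Type} [CommRing R]

lemma idealSum_le {ι : Type} (s : Finset ι) (f : ι → Ideal R) (J : Ideal R)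
    (h : ∀ b ∈ s, f b ≤ J) : ∑ x ∈ s, f x ≤ J := by
  classical
  induction s using Finset.induction_on with
  | empty => simp
  | insert b s hb ih =>
    rw [Finset.sum_insert hb, Submodule.add_eq_sup]
    exact sup_le (h _ (Finset.mem_insert_self _ _))
      (ih fun b hbs => h b (Finset.mem_insert_of_mem hbs))

lemma le_idealSum {ι : Type} {s : Finset ι} (f : ι → Ideal R) {b : ι} (hb : b ∈ s) :
    f b ≤ ∑ x ∈ s, f x :=
  Finset.single_le_sum (fun _ _ => bot_le) hb

lemma det_submatrix_mem_iff {m n : Type} [Fintype m] [DecidableEq m] [Fintype n] [DecidableEq n]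
    (A : Matrix n n R) (e f : m ≃ n) (I : Ideal R) :
    (A.submatrix e f).det ∈ I ↔ A.det ∈ I := by
  have h : A.submatrix ⇑e ⇑f = (A.submatrix e e).submatrix id ⇑(f.trans e.symm) := by
    ext q q'; simp
  rw [h, Matrix.det_permute' (f.trans e.symm), Matrix.det_submatrix_equiv_self]
  rcases Int.units_eq_one_or (Equiv.Perm.sign (f.trans e.symm)) with h1 | h1 <;>
    simp [h1, neg_mem_iff]

noncomputable def extendInj {n j : ℕ} (f : Fin j → Fin n) (hf : Function.Injective f) :
    Fin j ⊕ Fin (n - j) ≃ Fin n :=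
  (Equiv.sumCongr
      (Equiv.ofBijective
        (fun m => (⟨f m, Finset.mem_image_of_mem f (Finset.mem_univ m)⟩ :
          {x : Fin n // x ∈ Finset.image f Finset.univ}))
        (by
          rw [Fintype.bijective_iff_injective_and_card]
          refine ⟨fun x y hxy => hf (congrArg Subtype.val hxy), ?_⟩
          rw [Fintype.card_coe, Finset.card_image_of_injective _ hf]
          simp))
      (((Finset.image f Finset.univ)ᶜ.orderIsoOfFin
          (by simp [Finset.card_compl, Finset.card_image_of_injective _ hf])).toEquiv.trans
        (Equiv.subtypeEquivRight (fun x => by simp [Finset.mem_compl])))).trans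
    (Equiv.sumCompl (· ∈ Finset.image f Finset.univ))

lemma extendInj_inl {n j : ℕ} (f : Fin j → Fin n) (hf : Function.Injective f) (m : Fin j) :
    extendInj f hf (Sum.inl m) = f m := rfl

lemma extendInj_inr_not_mem {n j : ℕ} (f : Fin j → Fin n) (hf : Function.Injective f)
    (m : Fin (n - j)) : extendInj f hf (Sum.inr m) ∉ Finset.image f Finset.univ := by
  unfold extendInj
  simp only [Equiv.trans_apply, Equiv.sumCongr_apply, Sum.map_inr, Equiv.sumCompl_apply_inr]
  exact (fun (z : {x : Fin n // x ∉ Finset.image f Finset.univ}) => z.2) _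

lemma extendInj_inr_ne {n j : ℕ} (f : Fin j → Fin n) (hf : Function.Injective f)
    (m : Fin (n - j)) (x : Fin j) : extendInj f hf (Sum.inr m) ≠ f x := fun h =>
  extendInj_inr_not_mem f hf m (h ▸ Finset.mem_image_of_mem f (Finset.mem_univ x))

lemma det_mem_fittMat {m n : Type} [Fintype m] [Fintype n] [DecidableEq n]
    (A : Matrix m n R) (i k : ℕ) (hk : Fintype.card n - i = k)
    (r : Fin k → m) (c : Fin k → n) : (A.submatrix r c).det ∈ fittMat A i := by
  have e : Fin (Fintype.card n - i) ≃ Fin k := finCongr hk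
  have h : (A.submatrix r c).det = (A.submatrix (r ∘ e) (c ∘ e)).det := by
    rw [show A.submatrix (r ∘ ⇑e) (c ∘ ⇑e) = (A.submatrix r c).submatrix ⇑e ⇑e from rfl,
      Matrix.det_submatrix_equiv_self]
  exact h ▸ Ideal.subset_span ⟨r ∘ e, c ∘ e, rfl⟩

lemma fittMat_le {m n : Type} [Fintype m] [Fintype n] [DecidableEq n]
    (A : Matrix m n R) (i k : ℕ) (hk : Fintype.card n - i = k) {J : Ideal R}
    (h : ∀ (r : Fin k → m) (c : Fin k → n), (A.submatrix r c).det ∈ J) :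
    fittMat A i ≤ J := by
  rw [fittMat, Ideal.span_le]
  rintro x ⟨r, c, rfl⟩
  have e : Fin k ≃ Fin (Fintype.card n - i) := finCongr hk.symm
  have heq : (A.submatrix (r ∘ e) (c ∘ e)).det = (A.submatrix r c).det := by
    rw [show A.submatrix (r ∘ ⇑e) (c ∘ ⇑e) = (A.submatrix r c).submatrix ⇑e ⇑e from rfl,
      Matrix.det_submatrix_equiv_self]
  exact heq ▸ h (r ∘ e) (c ∘ e)

lemma det_blocks {m n : Type} [Fintype m] [Fintype n] [DecidableEq m] [DecidableEq n]
    (B : Matrix (m ⊕ n) (m ⊕ n) R) (h12 : B.toBlocks₁₂ = 0) :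
    B.det = B.toBlocks₁₁.det * B.toBlocks₂₂.det := by
  rw [← Matrix.fromBlocks_toBlocks B, h12, Matrix.det_fromBlocks_zero₁₂]
  simp [Matrix.toBlocks_fromBlocks₁₁, Matrix.toBlocks_fromBlocks₂₂]

lemma prod_orderIso {s : ℕ} (a : Finset (Fin s)) (ν : Fin s → R) :
    (∏ m : Fin a.card, ν ((a.orderIsoOfFin rfl m : Fin s))) = ∏ k ∈ a, ν k := by
  rw [← Finset.prod_coe_sort a ν]
  exact Fintype.prod_equiv (a.orderIsoOfFin rfl).toEquiv _ _ (fun m => rfl)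

set_option maxHeartbeats 1000000 in
theorem core {s : ℕ} (ν t : Fin s → R) (h0 : ∀ l, ν l * t l = 0) (i : ℕ) (hi : i ≤ s) :
    fittMat (Mmat ν t) i
      = ∑ j ∈ Finset.range (s - i + 1),
          ∑ a ∈ Finset.powersetCard j (Finset.univ : Finset (Fin s)),
            Ideal.span {∏ k ∈ a, ν k} *
              fittMat (Nmat (fun m : Fin (aᶜ).card => t ((aᶜ).orderIsoOfFin rfl m : Fin s))) i := by
  classical
  refine le_antisymm ?hle ?hge
  case hge =>
    refine idealSum_le _ _ _ fun j hj => idealSum_le _ _ _ fun a ha => ?_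
    rw [Finset.mem_range, Nat.lt_succ_iff] at hj
    rw [Finset.mem_powersetCard_univ] at ha
    set E := (aᶜ).orderIsoOfFin rfl with hE
    set t' : Fin (aᶜ).card → R := fun m => t ((E m : Fin s)) with ht'
    rw [show fittMat (Nmat t') i = Ideal.span {x : R |
          ∃ (rr : Fin (Fintype.card (Fin (aᶜ).card) - i) → rowPairs (aᶜ).card)
            (cc : Fin (Fintype.card (Fin (aᶜ).card) - i) → Fin (aᶜ).card),
          x = ((Nmat t').submatrix rr cc).det} from rfl,
      Ideal.span_mul_span', Ideal.span_le]
    rintro x ⟨p, hp, d, ⟨rr, cc, rfl⟩, rfl⟩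
    rw [Set.mem_singleton_iff] at hp
    subst hp
    -- build the minor of `Mmat`
    have hEinj : Function.Injective (fun z : Fin (aᶜ).card => (E z : Fin s)) :=
      fun z z' h => E.injective (Subtype.ext h)
    set embA := a.orderIsoOfFin ha with hembA
    set Rows : Fin j ⊕ Fin (Fintype.card (Fin (aᶜ).card) - i) → Fin s ⊕ rowPairs s :=
      Sum.elim (fun m => Sum.inl (embA m : Fin s))
        (fun m => Sum.inr ⟨((E ((rr m).val.1) : Fin s), (E ((rr m).val.2) : Fin s)),
          Subtype.coe_lt_coe.mpr (E.strictMono (rr m).2)⟩) with hRows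
    set Cols : Fin j ⊕ Fin (Fintype.card (Fin (aᶜ).card) - i) → Fin s :=
      Sum.elim (fun m => (embA m : Fin s)) (fun m => (E (cc m) : Fin s)) with hCols
    have h1 : Fintype.card (Fin s) - i = j + (Fintype.card (Fin (aᶜ).card) - i) := by
      have hac : (aᶜ).card = s - j := by rw [Finset.card_compl, ha, Fintype.card_fin]
      rw [Fintype.card_fin, Fintype.card_fin, hac]; omega
    set e1 : Fin (Fintype.card (Fin s) - i) ≃ Fin j ⊕ Fin (Fintype.card (Fin (aᶜ).card) - i) :=
      (finCongr h1).trans finSumFinEquiv.symm with he1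
    refine Ideal.subset_span ⟨Rows ∘ e1, Cols ∘ e1, ?_⟩
    have hsub : (Mmat ν t).submatrix (Rows ∘ ⇑e1) (Cols ∘ ⇑e1)
        = ((Mmat ν t).submatrix Rows Cols).submatrix ⇑e1 ⇑e1 := rfl
    rw [hsub, Matrix.det_submatrix_equiv_self]
    set B := (Mmat ν t).submatrix Rows Cols with hB
    have h12 : B.toBlocks₁₂ = 0 := by
      ext m m'
      have hne : (E (cc m') : Fin s) ≠ (embA m : Fin s) := by
        intro h
        have h2 : (embA m : Fin s) ∈ aᶜ := h ▸ (E (cc m')).2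
        exact (Finset.mem_compl.mp h2) (embA m).2
      simp only [Matrix.toBlocks₁₂, hB, Matrix.of_apply, Matrix.submatrix_apply]; simp [Matrix.toBlocks₁₂, hB, hRows, hCols, Mmat, Sum.elim, hne]
    have h11 : B.toBlocks₁₁ = Matrix.diagonal (fun m => ν (embA m : Fin s)) := by
      ext m m'
      by_cases h : m = m'
      · subst h; simp only [Matrix.toBlocks₁₁, hB, Matrix.of_apply, Matrix.submatrix_apply]; simp [Matrix.toBlocks₁₁, hB, hRows, hCols, Mmat, Sum.elim]
      · have hne : (embA m' : Fin s) ≠ (embA m : Fin s) := by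
          intro hcc; exact h (embA.injective (Subtype.ext hcc)).symm
        simp only [Matrix.toBlocks₁₁, hB, Matrix.of_apply, Matrix.submatrix_apply]; simp [Matrix.toBlocks₁₁, hB, hRows, hCols, Mmat, Sum.elim, hne, Matrix.diagonal_apply_ne _ h]
    have h22 : B.toBlocks₂₂ = (Nmat t').submatrix rr cc := by
      ext m m'
      by_cases hA : cc m' = (rr m).val.1
      · simp only [Matrix.toBlocks₂₂, hB, Matrix.of_apply, Matrix.submatrix_apply]; simp [Matrix.toBlocks₂₂, hB, hRows, hCols, Mmat, Sum.elim, Nmat, hA, ht']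
      · have hA' : (E (cc m') : Fin s) ≠ (E ((rr m).val.1) : Fin s) := fun h => hA (hEinj h)
        by_cases hBc : cc m' = (rr m).val.2
        · have hne2 : ((rr m).val.2) ≠ ((rr m).val.1) := ne_of_gt (rr m).2
          have hne2' : (E ((rr m).val.2) : Fin s) ≠ (E ((rr m).val.1) : Fin s) :=
            fun h => hne2 (hEinj h)
          simp only [Matrix.toBlocks₂₂, hB, Matrix.of_apply, Matrix.submatrix_apply]; simp [Matrix.toBlocks₂₂, hB, hRows, hCols, Mmat, Sum.elim, Nmat, hA, hA', hBc, hne2, hne2', ht']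
        · have hB' : (E (cc m') : Fin s) ≠ (E ((rr m).val.2) : Fin s) := fun h => hBc (hEinj h)
          simp only [Matrix.toBlocks₂₂, hB, Matrix.of_apply, Matrix.submatrix_apply]; simp [Matrix.toBlocks₂₂, hB, hRows, hCols, Mmat, Sum.elim, Nmat, hA, hA', hBc, hB']
    rw [det_blocks B h12, h11, h22, Matrix.det_diagonal]
    congr 1
    rw [show (fun m => ν ((embA m : Fin s))) = fun m => ν ((a.orderIsoOfFin ha m : Fin s)) from rfl]
    subst ha
    exact (prod_orderIso a ν).symm
  case hle =>
    refine fittMat_le _ i (Fintype.card (Fin s) - i) rfl ?_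
    intro r c
    have hKs : Fintype.card (Fin s) - i = s - i := by rw [Fintype.card_fin]
    by_cases hcinj : Function.Injective c
    swap
    · rw [Function.not_injective_iff] at hcinj
      obtain ⟨q, q', h1, h2⟩ := hcinj
      rw [Matrix.det_zero_of_column_eq h2
        (fun k => by rw [Matrix.submatrix_apply, Matrix.submatrix_apply, h1])]
      exact zero_mem _
    by_cases hrinj : Function.Injective r
    swap
    · rw [Function.not_injective_iff] at hrinj
      obtain ⟨p, p', h1, h2⟩ := hrinj
      rw [Matrix.det_zero_of_row_eq h2
        (by funext k; rw [Matrix.submatrix_apply, Matrix.submatrix_apply, h1])]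
      exact zero_mem _
    by_cases hfull : ∀ p l, r p = Sum.inl l → ∃ q, c q = l
    swap
    · push_neg at hfull
      obtain ⟨p, l, hpl, hnone⟩ := hfull
      rw [Matrix.det_eq_zero_of_row_eq_zero p (fun q => by
        rw [Matrix.submatrix_apply, hpl]
        simp [Mmat, Sum.elim, hnone q])]
      exact zero_mem _
    set a : Finset (Fin s) := Finset.univ.filter (fun l => ∃ p, r p = Sum.inl l) with haDef
    have hmema : ∀ l, l ∈ a ↔ ∃ p, r p = Sum.inl l := by
      intro l; simp [haDef]
    set embA := a.orderIsoOfFin rfl with hembA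
    have hex : ∀ m : Fin a.card, ∃ p, r p = Sum.inl (embA m : Fin s) :=
      fun m => (hmema _).1 (embA m).2
    choose f hf using hex
    have hfinj : Function.Injective f := fun m m' h => by
      have h2 : Sum.inl (β := rowPairs s) (embA m : Fin s) = Sum.inl (embA m' : Fin s) := by
        rw [← hf m, ← hf m', h]
      exact embA.injective (Subtype.ext (Sum.inl.inj h2))
    have hgex : ∀ m : Fin a.card, ∃ q, c q = (embA m : Fin s) := fun m => hfull (f m) _ (hf m)
    choose g hg using hgex
    have hginj : Function.Injective g := fun m m' h => by
      have h2 : (embA m : Fin s) = (embA m' : Fin s) := by rw [← hg m, ← hg m', h]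
      exact embA.injective (Subtype.ext h2)
    set φ := extendInj f hfinj with hφ
    set ψ := extendInj g hginj with hψ
    rw [← det_submatrix_mem_iff ((Mmat ν t).submatrix r c) φ ψ]
    rw [show ((Mmat ν t).submatrix r c).submatrix ⇑φ ⇑ψ
        = (Mmat ν t).submatrix (r ∘ ⇑φ) (c ∘ ⇑ψ) from rfl]
    set B := (Mmat ν t).submatrix (r ∘ ⇑φ) (c ∘ ⇑ψ) with hB
    have hrowl : ∀ m, r (φ (Sum.inl m)) = Sum.inl (embA m : Fin s) := fun m => by
      rw [hφ, extendInj_inl]; exact hf m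
    have hcoll : ∀ m, c (ψ (Sum.inl m)) = (embA m : Fin s) := fun m => by
      rw [hψ, extendInj_inl]; exact hg m
    have hcolr : ∀ m', c (ψ (Sum.inr m')) ∉ a := by
      intro m' hmem
      set m0 := embA.symm ⟨c (ψ (Sum.inr m')), hmem⟩ with hm0
      have hrep : (embA m0 : Fin s) = c (ψ (Sum.inr m')) := by
        rw [hm0, OrderIso.apply_symm_apply]
      have h2 : ψ (Sum.inr m') = g m0 := hcinj (((hg m0).trans hrep).symm)
      exact extendInj_inr_ne g hginj m' m0 h2
    have hrowr : ∀ m, ∃ p : rowPairs s, r (φ (Sum.inr m)) = Sum.inr p := by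
      intro m
      cases h' : r (φ (Sum.inr m)) with
      | inl l =>
        exfalso
        have hla : l ∈ a := (hmema l).2 ⟨_, h'⟩
        have h2 : r (f (embA.symm ⟨l, hla⟩)) = Sum.inl l := by
          rw [hf]; congr 1; rw [OrderIso.apply_symm_apply]
        have h3 := hrinj (h'.trans h2.symm)
        exact extendInj_inr_ne f hfinj m _ h3
      | inr p => exact ⟨p, rfl⟩
    choose P hP using hrowr
    have h12 : B.toBlocks₁₂ = 0 := by
      ext m m'
      have hne : c (ψ (Sum.inr m')) ≠ (embA m : Fin s) :=
        fun h => hcolr m' (h ▸ (embA m).2)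
      simp only [Matrix.toBlocks₁₂, hB, Matrix.of_apply, Matrix.submatrix_apply]; simp [Matrix.toBlocks₁₂, hB, Mmat, Sum.elim, hrowl m, hne]
    have h11 : B.toBlocks₁₁ = Matrix.diagonal (fun m => ν (embA m : Fin s)) := by
      ext m m'
      by_cases h : m = m'
      · subst h; simp only [Matrix.toBlocks₁₁, hB, Matrix.of_apply, Matrix.submatrix_apply]; simp [Matrix.toBlocks₁₁, hB, Mmat, Sum.elim, hrowl m, hcoll m]
      · have hne : (embA m' : Fin s) ≠ (embA m : Fin s) :=
          fun hcc => h (embA.injective (Subtype.ext hcc)).symm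
        simp only [Matrix.toBlocks₁₁, hB, Matrix.of_apply, Matrix.submatrix_apply]; simp [Matrix.toBlocks₁₁, hB, Mmat, Sum.elim, hrowl m, hcoll m', hne, Matrix.diagonal_apply_ne _ h]
    rw [det_blocks B h12, h11, Matrix.det_diagonal]
    have hprod : (∏ m, ν ((embA m : Fin s))) = ∏ k ∈ a, ν k := prod_orderIso a ν
    rw [hprod]
    set W := B.toBlocks₂₂ with hW
    have hWentry : ∀ m m', W m m' = Nmat t (P m) (c (ψ (Sum.inr m'))) := by
      intro m m'
      simp only [hW, Matrix.toBlocks₂₂, hB, Matrix.of_apply, Matrix.submatrix_apply]; simp [hW, Matrix.toBlocks₂₂, hB, hP m, Mmat, Sum.elim]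
    by_cases hgood : ∀ m, (P m).val.1 ∉ a ∧ (P m).val.2 ∉ a
    · -- the minor is a genuine minor of `Nmat` on the complement of `a`
      set E := (aᶜ).orderIsoOfFin rfl with hE
      have hEinj : Function.Injective (fun z : Fin (aᶜ).card => (E z : Fin s)) :=
        fun z z' h => E.injective (Subtype.ext h)
      set t' : Fin (aᶜ).card → R := fun m => t ((E m : Fin s)) with ht'
      set rr : Fin (Fintype.card (Fin s) - i - a.card) → rowPairs (aᶜ).card := fun m =>
        ⟨(E.symm ⟨(P m).val.1, Finset.mem_compl.mpr (hgood m).1⟩,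
          E.symm ⟨(P m).val.2, Finset.mem_compl.mpr (hgood m).2⟩),
          E.symm.strictMono (Subtype.mk_lt_mk.mpr (P m).2)⟩ with hrr
      set cc : Fin (Fintype.card (Fin s) - i - a.card) → Fin (aᶜ).card := fun m =>
        E.symm ⟨c (ψ (Sum.inr m)), Finset.mem_compl.mpr (hcolr m)⟩ with hcc
      have key1 : ∀ m m', cc m' = (rr m).val.1 ↔ c (ψ (Sum.inr m')) = (P m).val.1 := by
        intro m m'
        constructor
        · intro h
          have h2 := congrArg (fun z => (E z : Fin s)) h
          simpa [hcc, hrr] using h2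
        · intro h
          simp only [hcc, hrr]
          exact congrArg E.symm (Subtype.ext h)
      have key2 : ∀ m m', cc m' = (rr m).val.2 ↔ c (ψ (Sum.inr m')) = (P m).val.2 := by
        intro m m'
        constructor
        · intro h
          have h2 := congrArg (fun z => (E z : Fin s)) h
          simpa [hcc, hrr] using h2
        · intro h
          simp only [hcc, hrr]
          exact congrArg E.symm (Subtype.ext h)
      have hWeq : W = (Nmat t').submatrix rr cc := by
        ext m m'
        rw [hWentry m m', Matrix.submatrix_apply]
        rw [show Nmat t (P m) (c (ψ (Sum.inr m')))
            = if c (ψ (Sum.inr m')) = (P m).val.1 then -t ((P m).val.2)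
              else if c (ψ (Sum.inr m')) = (P m).val.2 then t ((P m).val.1) else 0 from rfl]
        rw [show Nmat t' (rr m) (cc m')
            = if cc m' = (rr m).val.1 then -t' ((rr m).val.2)
              else if cc m' = (rr m).val.2 then t' ((rr m).val.1) else 0 from rfl]
        have hv1 : t' ((rr m).val.2) = t ((P m).val.2) := by simp [ht', hrr]
        have hv2 : t' ((rr m).val.1) = t ((P m).val.1) := by simp [ht', hrr]
        by_cases h1 : c (ψ (Sum.inr m')) = (P m).val.1
        · rw [if_pos h1, if_pos ((key1 m m').mpr h1), hv1]
        · rw [if_neg h1, if_neg (fun hh => h1 ((key1 m m').mp hh))]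
          by_cases h2 : c (ψ (Sum.inr m')) = (P m).val.2
          · rw [if_pos h2, if_pos ((key2 m m').mpr h2), hv2]
          · rw [if_neg h2, if_neg (fun hh => h2 ((key2 m m').mp hh))]
      rw [hWeq]
      have hmem2 : ((Nmat t').submatrix rr cc).det ∈ fittMat (Nmat t') i := by
        refine det_mem_fittMat _ i (Fintype.card (Fin s) - i - a.card) ?_ rr cc
        rw [Fintype.card_fin, Finset.card_compl, Fintype.card_fin]
        omega
      have hterm : (∏ k ∈ a, ν k) * ((Nmat t').submatrix rr cc).det
          ∈ Ideal.span {∏ k ∈ a, ν k} * fittMat (Nmat t') i :=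
        Ideal.mul_mem_mul (Ideal.subset_span rfl) hmem2
      have hcard : a.card ≤ s - i := by
        have h4 := Fintype.card_le_of_injective f hfinj
        rw [Fintype.card_fin, Fintype.card_fin] at h4
        omega
      have h5 : Ideal.span {∏ k ∈ a, ν k} * fittMat (Nmat t') i ≤
          ∑ j ∈ Finset.range (s - i + 1), ∑ b ∈ Finset.powersetCard j Finset.univ,
            Ideal.span {∏ k ∈ b, ν k} *
              fittMat (Nmat (fun m : Fin (bᶜ).card => t ((bᶜ).orderIsoOfFin rfl m : Fin s))) i := by
        refine le_trans (le_idealSum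
            (fun b => Ideal.span {∏ k ∈ b, ν k} *
              fittMat (Nmat (fun m : Fin (bᶜ).card => t ((bᶜ).orderIsoOfFin rfl m : Fin s))) i)
            (Finset.mem_powersetCard_univ.mpr (rfl : a.card = a.card))) ?_
        exact le_idealSum
          (fun j => ∑ b ∈ Finset.powersetCard j (Finset.univ : Finset (Fin s)),
            Ideal.span {∏ k ∈ b, ν k} *
              fittMat (Nmat (fun m : Fin (bᶜ).card => t ((bᶜ).orderIsoOfFin rfl m : Fin s))) i)
          (Finset.mem_range.mpr (Nat.lt_succ_of_le hcard))
      exact h5 hterm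
    · -- a row of the minor is killed by the product of the `ν`
      push_neg at hgood
      obtain ⟨m, hm⟩ := hgood
      by_cases h1 : (P m).val.1 ∈ a
      · have hne : ∀ m', c (ψ (Sum.inr m')) ≠ (P m).val.1 :=
          fun m' h => hcolr m' (h ▸ h1)
        have hrow : W m = t ((P m).val.1) •
            (fun m' => if c (ψ (Sum.inr m')) = (P m).val.2 then (1 : R) else 0) := by
          funext m'
          rw [hWentry m m']
          rw [show Nmat t (P m) (c (ψ (Sum.inr m')))
              = if c (ψ (Sum.inr m')) = (P m).val.1 then -t ((P m).val.2)
                else if c (ψ (Sum.inr m')) = (P m).val.2 then t ((P m).val.1) else 0 from rfl]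
          rw [if_neg (hne m')]
          by_cases hc : c (ψ (Sum.inr m')) = (P m).val.2 <;> simp [hc]
        have hdet : W.det = t ((P m).val.1) * (W.updateRow m
            (fun m' => if c (ψ (Sum.inr m')) = (P m).val.2 then (1 : R) else 0)).det := by
          conv_lhs => rw [← Matrix.updateRow_eq_self W m, hrow, Matrix.det_updateRow_smul]
        rw [hdet, ← Finset.mul_prod_erase a ν h1]
        have hring : ν ((P m).val.1) * (∏ k ∈ a.erase ((P m).val.1), ν k) *
            (t ((P m).val.1) * (W.updateRow m
              (fun m' => if c (ψ (Sum.inr m')) = (P m).val.2 then (1 : R) else 0)).det)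
            = (ν ((P m).val.1) * t ((P m).val.1)) * ((∏ k ∈ a.erase ((P m).val.1), ν k) *
              (W.updateRow m
                (fun m' => if c (ψ (Sum.inr m')) = (P m).val.2 then (1 : R) else 0)).det) := by
          ring
        rw [hring, h0, zero_mul]
        exact zero_mem _
      · have h2 : (P m).val.2 ∈ a := hm h1
        have hne : ∀ m', c (ψ (Sum.inr m')) ≠ (P m).val.2 :=
          fun m' h => hcolr m' (h ▸ h2)
        have hrow : W m = (-t ((P m).val.2)) •
            (fun m' => if c (ψ (Sum.inr m')) = (P m).val.1 then (1 : R) else 0) := by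
          funext m'
          rw [hWentry m m']
          rw [show Nmat t (P m) (c (ψ (Sum.inr m')))
              = if c (ψ (Sum.inr m')) = (P m).val.1 then -t ((P m).val.2)
                else if c (ψ (Sum.inr m')) = (P m).val.2 then t ((P m).val.1) else 0 from rfl]
          by_cases hc : c (ψ (Sum.inr m')) = (P m).val.1 <;> simp [hc, hne m']
        have hdet : W.det = (-t ((P m).val.2)) * (W.updateRow m
            (fun m' => if c (ψ (Sum.inr m')) = (P m).val.1 then (1 : R) else 0)).det := by
          conv_lhs => rw [← Matrix.updateRow_eq_self W m, hrow, Matrix.det_updateRow_smul]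
        rw [hdet, ← Finset.mul_prod_erase a ν h2]
        have hring : ν ((P m).val.2) * (∏ k ∈ a.erase ((P m).val.2), ν k) *
            (-t ((P m).val.2) * (W.updateRow m
              (fun m' => if c (ψ (Sum.inr m')) = (P m).val.1 then (1 : R) else 0)).det)
            = (ν ((P m).val.2) * t ((P m).val.2)) * (-((∏ k ∈ a.erase ((P m).val.2), ν k) *
              (W.updateRow m
                (fun m' => if c (ψ (Sum.inr m')) = (P m).val.1 then (1 : R) else 0)).det)) := by
          ring
        rw [hring, h0, zero_mul]
        exact zero_mem _

end Aux

lemma nuElt_mul_sub_one {G : Type} [CommGroup G] [Fintype G] (τ : G) :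
    nuElt ℤ (Subgroup.zpowers τ) * (MonoidAlgebra.of ℤ G τ - 1) = 0 := by
  rw [mul_sub, mul_one, sub_eq_zero, nuElt, Finset.sum_mul]
  refine Finset.sum_nbij' (fun h => h * τ) (fun h => h * τ⁻¹) ?_ ?_ ?_ ?_ ?_
  · intro a ha
    simp only [Finset.mem_filter, Finset.mem_univ, true_and] at ha ⊢
    exact mul_mem ha (Subgroup.mem_zpowers τ)
  · intro a ha
    simp only [Finset.mem_filter, Finset.mem_univ, true_and] at ha ⊢
    exact mul_mem ha (inv_mem (Subgroup.mem_zpowers τ))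
  · intro a _; simp
  · intro a _; simp
  · intro a _
    rw [← _root_.map_mul]


/-- for `0 ≤ i ≤ s`,
`Fitt_i(M_s(ν,τ)) = Σ_{j=0}^{s-i} Σ_a ν_{a_1}⋯ν_{a_j} · Fitt_i(N_{s-j}(τ_{a_{j+1}},…,τ_{a_s}))`,
the inner sum over all `j`-element subsets `a = {a_1 < ⋯ < a_j}` of `{1,…,s}`, where
`a_{j+1} < ⋯ < a_s` enumerates the complement of `a`. -/
theorem statement3 {G : Type} [CommGroup G] [Fintype G] (I : Subgroup G)
    {s : ℕ} (σ : Fin s → G) (hdec : IsDecomp I σ) (i : ℕ) (hi : i ≤ s) :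
    fittMat (Mmat (fun l => nuElt ℤ (Subgroup.zpowers (σ l)))
        (fun l => MonoidAlgebra.of ℤ G (σ l) - 1)) i
      = ∑ j ∈ Finset.range (s - i + 1),
          ∑ a ∈ Finset.powersetCard j (Finset.univ : Finset (Fin s)),
            Ideal.span {∏ k ∈ a, nuElt ℤ (Subgroup.zpowers (σ k))} *
              fittMat (Nmat (fun m : Fin (aᶜ).card =>
                MonoidAlgebra.of ℤ G (σ (((aᶜ).orderIsoOfFin rfl m : Fin s))) - 1)) i := by
  exact Aux.core (fun l => nuElt ℤ (Subgroup.zpowers (σ l)))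
    (fun l => MonoidAlgebra.of ℤ G (σ l) - 1)
    (fun l => nuElt_mul_sub_one (σ l)) i hi
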